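/- Let A be a unital Banach algebra and a ∈ A with ν := ‖a² − a‖ < 1/4. Then there exists an idempotent p ∈ A with ‖p − a‖ ≤ (‖a‖ + 1/2)((1 − 4ν)^{−1/2} − 1). Moreover, p can be chosen to commute with every element y ∈ A that commutes with a. -/

import Mathlib

open Finset Nat

lemma dp_half (k : ℕ) :
    (descPochhammer ℤ k).smeval (-(1/2) : ℚ) =
      (-(1/4))^k * Nat.centralBinom k * k ! := by
  induction k with
  | zero => simp [Nat.centralBinom]
  | succ k ih =>
    rw [descPochhammer_succ_right, Polynomial.smeval_mul, ih, Polynomial.smeval_sub,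
      Polynomial.smeval_X, Polynomial.smeval_natCast]
    have h : ((k:ℚ)+1) * Nat.centralBinom (k+1) = 2 * (2*k+1) * Nat.centralBinom k := by
      exact_mod_cast Nat.succ_mul_centralBinom_succ k
    rw [Nat.factorial_succ]
    push_cast
    linear_combination ((-(1/4:ℚ))^k * (k !) * (1/4)) * h

lemma dp_negone (k : ℕ) :
    (descPochhammer ℤ k).smeval (-1 : ℚ) = (-1)^k * k ! := by
  induction k with
  | zero => simp
  | succ k ih =>
    rw [descPochhammer_succ_right, Polynomial.smeval_mul, ih, Polynomial.smeval_sub,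
      Polynomial.smeval_X, Polynomial.smeval_natCast, Nat.factorial_succ]
    push_cast
    ring

lemma choose_half (k : ℕ) :
    Ring.choose (-(1/2) : ℚ) k = (-(1/4))^k * Nat.centralBinom k := by
  have h := Ring.descPochhammer_eq_factorial_smul_choose (R := ℚ) (-(1/2)) k
  rw [dp_half, nsmul_eq_mul] at h
  have hk : (k ! : ℚ) ≠ 0 := by exact_mod_cast Nat.factorial_ne_zero k
  have h2 : (k ! : ℚ) * Ring.choose (-(1/2):ℚ) k = (k ! : ℚ) * ((-(1/4))^k * Nat.centralBinom k) := by
    rw [← h]; ring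
  exact mul_left_cancel₀ hk h2

lemma choose_negone (k : ℕ) :
    Ring.choose (-1 : ℚ) k = (-1)^k := by
  have h := Ring.descPochhammer_eq_factorial_smul_choose (R := ℚ) (-1) k
  rw [dp_negone, nsmul_eq_mul] at h
  have hk : (k ! : ℚ) ≠ 0 := by exact_mod_cast Nat.factorial_ne_zero k
  have h2 : (k ! : ℚ) * Ring.choose (-1:ℚ) k = (k ! : ℚ) * (-1)^k := by
    rw [← h]; ring
  exact mul_left_cancel₀ hk h2

lemma centralBinom_conv (n : ℕ) :
    ∑ ij ∈ Finset.HasAntidiagonal.antidiagonal n, Nat.centralBinom ij.1 * Nat.centralBinom ij.2 = 4^n := by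
  have key := Ring.add_choose_eq (R := ℚ) (r := -(1/2)) (s := -(1/2)) n (Commute.all _ _)
  have hl : (-(1/2) : ℚ) + (-(1/2)) = -1 := by norm_num
  rw [hl, choose_negone] at key
  have : ((-1:ℚ))^n = ∑ ij ∈ Finset.HasAntidiagonal.antidiagonal n,
      ((-(1/4:ℚ))^ij.1 * Nat.centralBinom ij.1) * ((-(1/4))^ij.2 * Nat.centralBinom ij.2) := by
    rw [key]; exact Finset.sum_congr rfl fun ij _ => by rw [choose_half, choose_half]
  have h2 : ((-1:ℚ))^n = (-(1/4))^n *
      ∑ ij ∈ Finset.HasAntidiagonal.antidiagonal n, (Nat.centralBinom ij.1 * Nat.centralBinom ij.2 : ℚ) := by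
    rw [this, Finset.mul_sum]
    refine Finset.sum_congr rfl fun ij hij => ?_
    rw [Finset.HasAntidiagonal.mem_antidiagonal] at hij
    rw [← hij, pow_add]; ring
  have h4 : ((-(1/4):ℚ))^n ≠ 0 := pow_ne_zero _ (by norm_num)
  have h5 : (∑ ij ∈ Finset.HasAntidiagonal.antidiagonal n, (Nat.centralBinom ij.1 * Nat.centralBinom ij.2 : ℚ))
      = 4^n := by
    have : ((-1:ℚ))^n = (-(1/4))^n * 4^n := by
      rw [← mul_pow]; norm_num
    rw [this] at h2
    exact (mul_left_cancel₀ h4 h2.symm)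
  exact_mod_cast h5

lemma centralBinom_le_four_pow (n : ℕ) : Nat.centralBinom n ≤ 4^n := by
  calc Nat.centralBinom n ≤ ∑ ij ∈ Finset.HasAntidiagonal.antidiagonal n,
        Nat.centralBinom ij.1 * Nat.centralBinom ij.2 := by
        refine Finset.single_le_sum (f := fun ij => Nat.centralBinom ij.1 * Nat.centralBinom ij.2)
          (fun i _ => Nat.zero_le _) (a := (n, 0)) ?_ |>.trans_eq' ?_
        · simp [Finset.mem_antidiagonal]
        · simp [Nat.centralBinom]
    _ = 4^n := centralBinom_conv n

/-- If `‖a² − a‖ < 1/4` in a unital Banach algebra, there is an idempotent `p` with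
`‖p − a‖ ≤ (‖a‖ + 1/2)((1 − 4ν)^{−1/2} − 1)`, commuting with everything commuting
with `a`. -/
theorem exists_idempotent_near {A : Type*} [NormedRing A] [NormOneClass A]
    [CompleteSpace A] [NormedAlgebra ℂ A]
    (a : A) (hν : ‖a * a - a‖ < 1 / 4) :
    ∃ p : A, p * p = p ∧
      ‖p - a‖ ≤ (‖a‖ + 1 / 2) * ((1 - 4 * ‖a * a - a‖) ^ (-(1 / 2 : ℝ)) - 1) ∧
      ∀ y : A, y * a = a * y → y * p = p * y := by
  set ν := ‖a * a - a‖ with hνdef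
  have hν0 : (0:ℝ) ≤ ν := norm_nonneg _
  have h4ν : 4 * ν < 1 := by linarith
  have h4ν0 : (0:ℝ) ≤ 4 * ν := by linarith
  set b := a - a * a with hbdef
  have hbν : ‖b‖ = ν := norm_sub_rev _ _
  -- the series terms
  set f : ℕ → A := fun n => Nat.centralBinom n • b ^ n with hfdef
  set g : ℕ → ℝ := fun n => (Nat.centralBinom n : ℝ) * ν ^ n with hgdef
  have hg0 : ∀ n, 0 ≤ g n := fun n => mul_nonneg (by positivity) (pow_nonneg hν0 n)
  have hfg : ∀ n, ‖f n‖ ≤ g n := by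
    intro n
    calc ‖f n‖ ≤ Nat.centralBinom n * ‖b ^ n‖ := norm_nsmul_le
      _ ≤ Nat.centralBinom n * ν ^ n := by
          refine mul_le_mul_of_nonneg_left ?_ (by positivity)
          rw [← hbν]; exact norm_pow_le _ _
      _ = g n := rfl
  have hg4 : ∀ n, g n ≤ (4 * ν) ^ n := by
    intro n
    rw [mul_pow]
    refine mul_le_mul_of_nonneg_right ?_ (pow_nonneg hν0 n)
    calc (Nat.centralBinom n : ℝ) ≤ ((4:ℕ)^n : ℕ) := by exact_mod_cast _root_.centralBinom_le_four_pow n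
      _ = (4:ℝ)^n := by push_cast; ring
  have hgsum : Summable g :=
    Summable.of_nonneg_of_le hg0 hg4 (summable_geometric_of_lt_one h4ν0 h4ν)
  have hfnsum : Summable (fun n => ‖f n‖) :=
    Summable.of_nonneg_of_le (fun n => norm_nonneg _) hfg hgsum
  have hfsum : Summable f := hfnsum.of_norm
  set s := ∑' n, f n with hsdef
  -- Cauchy product identity
  have hx : ‖(4:ℕ) • b‖ < 1 := by
    calc ‖(4:ℕ) • b‖ ≤ 4 * ‖b‖ := norm_nsmul_le
      _ = 4 * ν := by rw [hbν]
      _ < 1 := h4ν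
  have hss : s * s = ∑' n, ((4:ℕ) • b) ^ n := by
    rw [hsdef, tsum_mul_tsum_eq_tsum_sum_antidiagonal_of_summable_norm hfnsum hfnsum]
    refine tsum_congr fun n => ?_
    have h1 : ∀ ij ∈ Finset.HasAntidiagonal.antidiagonal n,
        f ij.1 * f ij.2 = (Nat.centralBinom ij.1 * Nat.centralBinom ij.2) • b ^ n := by
      intro ij hij
      rw [Finset.HasAntidiagonal.mem_antidiagonal] at hij
      rw [hfdef]
      simp only
      rw [smul_mul_assoc, mul_smul_comm, smul_smul, ← pow_add, hij]
    rw [Finset.sum_congr rfl h1, ← Finset.sum_smul, centralBinom_conv, smul_pow]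
  have hgeom : (1 - (4:ℕ) • b) * (s * s) = 1 := by
    rw [hss]; exact mul_neg_geom_series _ hx
  -- the half element
  set c : A := algebraMap ℂ A (1/2) with hcdef
  have hcz : ∀ z : A, c * z = z * c := fun z => Algebra.commutes _ _
  have h2c : c + c = 1 := by rw [hcdef, ← map_add]; norm_num
  have hcc : c * c = algebraMap ℂ A (1/4) := by rw [hcdef, ← map_mul]; norm_num
  have hcb : c * c - b = algebraMap ℂ A (1/4) * (1 - (4:ℕ) • b) := by
    rw [mul_sub, mul_one, hcc]
    congr 1
    rw [mul_smul_comm, ← Algebra.smul_def, ← Nat.cast_smul_eq_nsmul ℂ, smul_smul]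
    norm_num
  -- commutation facts
  have hcomm : ∀ y : A, y * a = a * y → Commute y s := by
    intro y hy
    have hya : Commute y a := hy
    have hyb : Commute y b := by
      rw [hbdef]
      exact hya.sub_right (hya.mul_right hya)
    exact Commute.tsum_right y fun n => (hyb.pow_right n).smul_right _
  have has : Commute a s := hcomm a rfl
  have hcs : Commute c s := hcz s
  set q := a - c with hqdef
  have hqs : Commute q s := has.sub_left hcs
  -- the idempotent
  set p := q * s + c with hpdef
  have hqq : q * q = c * c - b := by
    have h1 : a * c + c * a = a := by rw [hcz a, ← mul_add, h2c, mul_one]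
    have h2 : q * q = a * a - (a * c + c * a) + c * c := by rw [hqdef]; noncomm_ring
    rw [h2, h1, hbdef]
    noncomm_ring
  have hkey : (q * q) * (s * s) = c * c := by
    rw [hqq, hcb, mul_assoc, hgeom, mul_one, hcc]
  have hcc2 : c * c + c * c = c := by rw [hcc, hcdef, ← map_add]; norm_num
  have hcross : q * s * c + c * (q * s) = q * s := by
    rw [hcz (q * s), ← mul_add, h2c, mul_one]
  have hidem : p * p = p := by
    have e1 : q * s * (q * s) = (q * q) * (s * s) :=
      Commute.mul_mul_mul_comm hqs.symm q s
    calc p * p = q * s * (q * s) + (q * s * c + c * (q * s)) + c * c := by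
          rw [hpdef]; noncomm_ring
      _ = (q * q) * (s * s) + q * s + c * c := by rw [e1, hcross]
      _ = c * c + q * s + c * c := by rw [hkey]
      _ = q * s + (c * c + c * c) := by abel
      _ = p := by rw [hcc2, hpdef]
  -- norm bound
  have hf0 : f 0 = 1 := by simp [hfdef, Nat.centralBinom]
  have hg0' : g 0 = 1 := by simp [hgdef, Nat.centralBinom]
  have hftail : Summable (fun n => ‖f (n + 1)‖) := by
    exact_mod_cast (summable_nat_add_iff 1).mpr hfnsum
  have hgtail : Summable (fun n => g (n + 1)) := by
    exact_mod_cast (summable_nat_add_iff 1).mpr hgsum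
  have hs1 : s - 1 = ∑' n, f (n + 1) := by
    have h := Summable.tsum_eq_zero_add hfsum
    rw [hf0] at h
    rw [hsdef, h, add_sub_cancel_left]
  set F := ∑' n, g n with hFdef
  have hgt : ∑' n, g (n + 1) = F - 1 := by
    have h := Summable.tsum_eq_zero_add hgsum
    rw [hg0'] at h
    rw [hFdef, h, add_sub_cancel_left]
  have hsn : ‖s - 1‖ ≤ F - 1 := by
    rw [hs1, ← hgt]
    calc ‖∑' n, f (n + 1)‖ ≤ ∑' n, ‖f (n + 1)‖ := norm_tsum_le_tsum_norm hftail
      _ ≤ ∑' n, g (n + 1) := Summable.tsum_le_tsum (fun n => hfg (n + 1)) hftail hgtail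
  have hF1 : 1 ≤ F := by
    have h := Summable.le_tsum hgsum 0 (fun i _ => hg0 i)
    rw [hg0'] at h
    exact h
  -- F equals the rpow value
  have h1ν : (0:ℝ) < 1 - 4 * ν := by linarith
  have hgabs : Summable (fun n => ‖g n‖) := by
    simpa [Real.norm_eq_abs, abs_of_nonneg (hg0 _)] using hgsum
  have hFF : F * F = (1 - 4 * ν)⁻¹ := by
    rw [hFdef, tsum_mul_tsum_eq_tsum_sum_antidiagonal_of_summable_norm hgabs hgabs]
    have h1 : ∀ n, ∑ ij ∈ Finset.HasAntidiagonal.antidiagonal n, g ij.1 * g ij.2 = (4 * ν) ^ n := by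
      intro n
      have h2 : ∀ ij ∈ Finset.HasAntidiagonal.antidiagonal n,
          g ij.1 * g ij.2 = (Nat.centralBinom ij.1 * Nat.centralBinom ij.2 : ℝ) * ν ^ n := by
        intro ij hij
        rw [Finset.HasAntidiagonal.mem_antidiagonal] at hij
        rw [hgdef]
        simp only
        rw [← hij, pow_add]; ring
      rw [Finset.sum_congr rfl h2, ← Finset.sum_mul]
      have h3 : (∑ ij ∈ Finset.HasAntidiagonal.antidiagonal n,
          (Nat.centralBinom ij.1 * Nat.centralBinom ij.2 : ℝ)) = 4 ^ n := by
        exact_mod_cast congrArg (Nat.cast : ℕ → ℝ) (centralBinom_conv n)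
      rw [h3, mul_pow]
    rw [tsum_congr h1, tsum_geometric_of_lt_one h4ν0 h4ν]
  set Y := (1 - 4 * ν) ^ (-(1 / 2 : ℝ)) with hYdef
  have hYpos : 0 < Y := Real.rpow_pos_of_pos h1ν _
  have hY2 : Y * Y = (1 - 4 * ν)⁻¹ := by
    rw [hYdef, ← Real.rpow_add h1ν]
    norm_num
    exact Real.rpow_neg_one _
  have hFY : F = Y := by
    have hz : (F - Y) * (F + Y) = 0 := by linear_combination hFF - hY2
    rcases mul_eq_zero.mp hz with h | h
    · linarith
    · linarith
  have hpa : p - a = q * (s - 1) := by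
    rw [hpdef, hqdef]; noncomm_ring
  have hcn : ‖c‖ = 1 / 2 := by
    rw [hcdef, norm_algebraMap']
    rw [norm_div, norm_one]
    simp
  have hqn : ‖q‖ ≤ ‖a‖ + 1 / 2 := by
    calc ‖q‖ ≤ ‖a‖ + ‖c‖ := norm_sub_le _ _
      _ = ‖a‖ + 1 / 2 := by rw [hcn]
  have hbound : ‖p - a‖ ≤ (‖a‖ + 1 / 2) * (F - 1) := by
    calc ‖p - a‖ ≤ ‖q‖ * ‖s - 1‖ := by rw [hpa]; exact norm_mul_le _ _
      _ ≤ (‖a‖ + 1 / 2) * (F - 1) :=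
        mul_le_mul hqn hsn (norm_nonneg _) (by positivity)
  refine ⟨p, hidem, ?_, ?_⟩
  · rw [← hFY]; exact hbound
  · intro y hy
    have hys : Commute y s := hcomm y hy
    have hyc : Commute y c := (hcz y).symm
    have hya : Commute y a := hy
    have hyq : Commute y q := hya.sub_right hyc
    exact ((hyq.mul_right hys).add_right hyc).eq
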